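/- For the iteration u_{n+1} = e^{−h_n} u_n + (1 − e^{−h_n}) v_n in a normed space, if ‖v_n − y‖ ≤ ε for all n and Σ h_n = ∞, then limsup_n ‖u_n − y‖ ≤ ε. -/
import Mathlib


open Filter

theorem iteration_limsup_le
    {X : Type*} [NormedAddCommGroup X] [NormedSpace ℝ X]
    (y : X) (ε : ℝ) (v : ℕ → X) (hv : ∀ n, ‖v n - y‖ ≤ ε)
    (h : ℕ → ℝ) (hh : ∀ n, 0 < h n)
    (hdiv : Tendsto (fun n => ∑ i ∈ Finset.range n, h i) atTop atTop)
    (u : ℕ → X)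
    (hrec : ∀ n, u (n + 1) =
      Real.exp (-(h n)) • u n + (1 - Real.exp (-(h n))) • v n) :
    limsup (fun n => ‖u n - y‖) atTop ≤ ε := by
  set S : ℕ → ℝ := fun n => ∑ i ∈ Finset.range n, h i with hS
  have key : ∀ n, ‖u n - y‖ - ε ≤ Real.exp (-(S n)) * (‖u 0 - y‖ - ε) := by
    intro n
    induction n with
    | zero => simp [hS]
    | succ n ih =>
      have hexp_pos : 0 < Real.exp (-(h n)) := Real.exp_pos _
      have hexp_le : Real.exp (-(h n)) ≤ 1 := by
        rw [Real.exp_le_one_iff]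
        linarith [hh n]
      have step : ‖u (n + 1) - y‖ ≤ Real.exp (-(h n)) * ‖u n - y‖
          + (1 - Real.exp (-(h n))) * ε := by
        have heq : u (n + 1) - y =
            Real.exp (-(h n)) • (u n - y) + (1 - Real.exp (-(h n))) • (v n - y) := by
          rw [hrec n]
          module
        rw [heq]
        calc ‖Real.exp (-(h n)) • (u n - y) + (1 - Real.exp (-(h n))) • (v n - y)‖
            ≤ ‖Real.exp (-(h n)) • (u n - y)‖ + ‖(1 - Real.exp (-(h n))) • (v n - y)‖ :=
              norm_add_le _ _
          _ = Real.exp (-(h n)) * ‖u n - y‖ + (1 - Real.exp (-(h n))) * ‖v n - y‖ := by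
              rw [norm_smul, norm_smul, Real.norm_eq_abs, Real.norm_eq_abs,
                abs_of_pos hexp_pos, abs_of_nonneg (by linarith)]
          _ ≤ Real.exp (-(h n)) * ‖u n - y‖ + (1 - Real.exp (-(h n))) * ε := by
              have := hv n
              nlinarith
      have hS_succ : S (n + 1) = S n + h n := Finset.sum_range_succ _ _
      have : ‖u (n + 1) - y‖ - ε ≤ Real.exp (-(h n)) * (‖u n - y‖ - ε) := by
        nlinarith
      calc ‖u (n + 1) - y‖ - ε ≤ Real.exp (-(h n)) * (‖u n - y‖ - ε) := this
        _ ≤ Real.exp (-(h n)) * (Real.exp (-(S n)) * (‖u 0 - y‖ - ε)) := by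
            exact mul_le_mul_of_nonneg_left ih hexp_pos.le
        _ = Real.exp (-(S (n + 1))) * (‖u 0 - y‖ - ε) := by
            rw [hS_succ, neg_add, Real.exp_add]; ring
  have hb : ∀ n, ‖u n - y‖ ≤ ε + Real.exp (-(S n)) * (‖u 0 - y‖ - ε) := by
    intro n; linarith [key n]
  have htend : Tendsto (fun n => ε + Real.exp (-(S n)) * (‖u 0 - y‖ - ε)) atTop (nhds ε) := by
    have h1 : Tendsto (fun n => Real.exp (-(S n))) atTop (nhds 0) := by
      exact Real.tendsto_exp_atBot.comp (tendsto_neg_atBot_iff.mpr hdiv)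
    have h2 : Tendsto (fun n => ε + Real.exp (-(S n)) * (‖u 0 - y‖ - ε)) atTop
        (nhds (ε + 0 * (‖u 0 - y‖ - ε))) :=
      tendsto_const_nhds.add (h1.mul tendsto_const_nhds)
    simpa using h2
  calc limsup (fun n => ‖u n - y‖) atTop
      ≤ limsup (fun n => ε + Real.exp (-(S n)) * (‖u 0 - y‖ - ε)) atTop := by
        exact limsup_le_limsup (Eventually.of_forall hb)
          ((isBoundedUnder_of (⟨0, fun n => norm_nonneg _⟩ : ∃ b, ∀ n, ‖u n - y‖ ≥ b)).isCoboundedUnder_le)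
          htend.isBoundedUnder_le
    _ = ε := htend.limsup_eq
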